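/- Let G be a simple graph on n vertices with maximum degree at most d, let u, v be vertices of G, let t ≥ 0 be an integer, and let 0 < ε ≤ 1. If q_u^t and q_v^t are ε-close to collinear, then the smallest eigenvalue of the 2×2 symmetric matrix A_{u,v} is at most 10ε. -/

import Mathlib

open scoped RealInnerProductSpace

open scoped Classical in
/-- The lazy random walk matrix of a graph `G` with degree parameter `d`. -/
noncomputable def lazyWalk {n : ℕ} (G : SimpleGraph (Fin n)) (d : ℕ) :
    Matrix (Fin n) (Fin n) ℝ :=
  Matrix.of fun u v =>
    if u = v then 1 - ((G.neighborSet u).ncard : ℝ) / (2 * d)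
    else if G.Adj u v then 1 / (2 * d) else 0

/-- `G` has maximum degree at most `d`. -/
def MaxDegreeLE {n : ℕ} (G : SimpleGraph (Fin n)) (d : ℕ) : Prop :=
  ∀ v, (G.neighborSet v).ncard ≤ d

/-- `p_u^t`: the endpoint distribution of a length-`t` lazy random walk from `u`. -/
noncomputable def pvec {n : ℕ} (G : SimpleGraph (Fin n)) (d t : ℕ) (u : Fin n) :
    EuclideanSpace ℝ (Fin n) :=
  WithLp.toLp 2 fun v => ((lazyWalk G d ^ t).mulVec fun w => if w = u then 1 else 0) v

/-- `q_u^t = p_u^t - (1/n) 𝟙`. -/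
noncomputable def qvec {n : ℕ} (G : SimpleGraph (Fin n)) (d t : ℕ) (u : Fin n) :
    EuclideanSpace ℝ (Fin n) :=
  WithLp.toLp 2 fun v => pvec G d t u v - 1 / n

/-- `q_u^0 = 1_u - (1/n) 𝟙`. -/
noncomputable def qzero {n : ℕ} (u : Fin n) : EuclideanSpace ℝ (Fin n) :=
  WithLp.toLp 2 fun v => (if v = u then 1 else 0) - 1 / n

/-- average of `q_u^0` over `u ∈ S`. -/
noncomputable def qavg {n : ℕ} (S : Finset (Fin n)) : EuclideanSpace ℝ (Fin n) :=
  (S.card : ℝ)⁻¹ • ∑ u ∈ S, qzero u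

/-- `a` and `b` are `ε`-close to collinear. -/
def CloseCollinear {E : Type*} [NormedAddCommGroup E] [NormedSpace ℝ E]
    (ε : ℝ) (a b : E) : Prop :=
  ∃ (ea eb w : E) (s s' : ℝ),
    ‖ea‖ ≤ ε ∧ ‖eb‖ ≤ ε ∧ a + ea = s • w ∧ b + eb = s' • w

/-- `a` and `b` are `ε`-close to antipodal. -/
def CloseAntipodal {E : Type*} [NormedAddCommGroup E] [NormedSpace ℝ E]
    (ε : ℝ) (a b : E) : Prop :=
  ∃ (ea eb w : E) (s s' : ℝ), 0 ≤ s ∧ 0 ≤ s' ∧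
    ‖ea‖ ≤ ε ∧ ‖eb‖ ≤ ε ∧ a + ea = s • w ∧ b + eb = -(s' • w)

/-- `a` and `b` are `ε`-close to podal. -/
def ClosePodal {E : Type*} [NormedAddCommGroup E] [NormedSpace ℝ E]
    (ε : ℝ) (a b : E) : Prop :=
  ∃ (ea eb w : E) (s s' : ℝ), 0 ≤ s ∧ 0 ≤ s' ∧
    ‖ea‖ ≤ ε ∧ ‖eb‖ ≤ ε ∧ a + ea = s • w ∧ b + eb = s' • w

/-- The Gram matrix `A_{u,v}` of two vectors. -/
noncomputable def gram2 {n : ℕ} (a b : EuclideanSpace ℝ (Fin n)) :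
    Matrix (Fin 2) (Fin 2) ℝ :=
  !![‖a‖ ^ 2, ⟪a, b⟫; ⟪b, a⟫, ‖b‖ ^ 2]

/-- Number of edges of `G` between `S` and `C \ S` (for `S ⊆ C`). -/
noncomputable def cutEdgesIn {n : ℕ} (G : SimpleGraph (Fin n)) (C S : Finset (Fin n)) : ℕ :=
  {p : Fin n × Fin n | p.1 ∈ S ∧ p.2 ∈ C ∧ p.2 ∉ S ∧ G.Adj p.1 p.2}.ncard

/-- Number of edges of `G` between `S` and its complement. -/
noncomputable def cutEdges {n : ℕ} (G : SimpleGraph (Fin n)) (S : Finset (Fin n)) : ℕ :=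
  cutEdgesIn G Finset.univ S

/-- The cut conductance `φ_G(S) = e(S, V∖S) / (d|S|)`. -/
noncomputable def cutCond {n : ℕ} (G : SimpleGraph (Fin n)) (d : ℕ) (S : Finset (Fin n)) : ℝ :=
  (cutEdges G S : ℝ) / (d * S.card)

/-- The (inner) conductance of the induced subgraph `G[C]` is at least `φ`. -/
def InnerConductanceGE {n : ℕ} (G : SimpleGraph (Fin n)) (d : ℕ) (C : Finset (Fin n))
    (φ : ℝ) : Prop :=
  ∀ S ⊆ C, S.Nonempty → 2 * S.card ≤ C.card →
    φ ≤ (cutEdgesIn G C S : ℝ) / (d * S.card)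

/-- `G` is `(2, φ)`-clusterable. -/
def Clusterable2 {n : ℕ} (G : SimpleGraph (Fin n)) (d : ℕ) (φ : ℝ) : Prop :=
  InnerConductanceGE G d Finset.univ φ ∨
  ∃ C₁ C₂ : Finset (Fin n), C₁.Nonempty ∧ C₂.Nonempty ∧ Disjoint C₁ C₂ ∧
    C₁ ∪ C₂ = Finset.univ ∧ InnerConductanceGE G d C₁ φ ∧ InnerConductanceGE G d C₂ φ

/-- `G` is `ε`-far from `(2, φ)`-clusterable. -/
def FarFromClusterable2 {n : ℕ} (G : SimpleGraph (Fin n)) (d : ℕ) (ε φ : ℝ) : Prop :=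
  ∀ G' : SimpleGraph (Fin n), MaxDegreeLE G' d →
    ((symmDiff G.edgeSet G'.edgeSet).ncard : ℝ) ≤ ε * d * n →
    ¬ Clusterable2 G' d φ

/-- The span of the eigenvectors of `M` with eigenvalue greater than `c`. -/
noncomputable def heavySpace {n : ℕ} (M : Matrix (Fin n) (Fin n) ℝ) (c : ℝ) :
    Submodule ℝ (EuclideanSpace ℝ (Fin n)) :=
  ⨆ μ : {μ : ℝ // c < μ}, Module.End.eigenspace (Matrix.toEuclideanLin M) (μ : ℝ)

/-- Orthogonal projection onto the span of the eigenvectors of `M` with eigenvalue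
greater than `c`. -/
noncomputable def heavyProj {n : ℕ} (M : Matrix (Fin n) (Fin n) ℝ) (c : ℝ)
    (x : EuclideanSpace ℝ (Fin n)) : EuclideanSpace ℝ (Fin n) :=
  ((heavySpace M c).orthogonalProjectionOnto x : EuclideanSpace ℝ (Fin n))


lemma eig2 (p q r : ℝ) :
    ∃ (μ : ℝ) (x : Fin 2 → ℝ), x ≠ 0 ∧
      (Matrix.of ![![p, q], ![q, r]]).mulVec x = μ • x ∧
      ∀ y₁ y₂ : ℝ, y₁ ^ 2 + y₂ ^ 2 = 1 →
        μ ≤ p * y₁ ^ 2 + 2 * q * y₁ * y₂ + r * y₂ ^ 2 := by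
  set D := Real.sqrt ((p - r) ^ 2 + 4 * q ^ 2) with hD
  have hD2 : D ^ 2 = (p - r) ^ 2 + 4 * q ^ 2 := Real.sq_sqrt (by positivity)
  have hDpr : |p - r| ≤ D := by
    rw [hD, ← Real.sqrt_sq_eq_abs]
    exact Real.sqrt_le_sqrt (by nlinarith [sq_nonneg q])
  set μ := (p + r - D) / 2 with hμdef
  have hμp : μ ≤ p := by
    have h1 : r - p ≤ |p - r| := by rw [abs_sub_comm]; exact le_abs_self _
    have := le_trans h1 hDpr
    rw [hμdef]; linarith
  have hμr : μ ≤ r := by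
    have := le_trans (le_abs_self (p - r)) hDpr
    rw [hμdef]; linarith
  have hchar : (p - μ) * (r - μ) = q ^ 2 := by
    have h2 : (p - μ) * (r - μ) = (D ^ 2 - (p - r) ^ 2) / 4 := by rw [hμdef]; ring
    rw [h2, hD2]; ring
  have hray : ∀ y₁ y₂ : ℝ, y₁ ^ 2 + y₂ ^ 2 = 1 →
      μ ≤ p * y₁ ^ 2 + 2 * q * y₁ * y₂ + r * y₂ ^ 2 := by
    intro y₁ y₂ hy
    rcases eq_or_lt_of_le (by linarith : (0:ℝ) ≤ (p - μ) + (r - μ)) with hsum | hsum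
    · have hp : p = μ := by linarith
      have hr : r = μ := by linarith
      have hq2 : q ^ 2 = 0 := by nlinarith [hchar]
      have hq0 : q = 0 := by
        have := sq_eq_zero_iff.mp hq2
        exact this
      rw [hp, hr, hq0]
      have heq : μ * y₁ ^ 2 + 2 * 0 * y₁ * y₂ + μ * y₂ ^ 2 = μ := by
        linear_combination μ * hy
      exact heq.ge
    · have hid : ((p - μ) + (r - μ)) * ((p - μ) * y₁ ^ 2 + 2 * q * y₁ * y₂ + (r - μ) * y₂ ^ 2)
          = ((p - μ) * y₁ + q * y₂) ^ 2 + (q * y₁ + (r - μ) * y₂) ^ 2 := by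
        linear_combination (y₁ ^ 2 + y₂ ^ 2) * hchar
      have h3 : 0 ≤ ((p - μ) + (r - μ)) *
          ((p - μ) * y₁ ^ 2 + 2 * q * y₁ * y₂ + (r - μ) * y₂ ^ 2) := by
        rw [hid]; positivity
      have h4 : (p - μ + (r - μ)) * ((p - μ) * y₁ ^ 2 + 2 * q * y₁ * y₂ + (r - μ) * y₂ ^ 2)
          = (p - μ + (r - μ)) * (p * y₁ ^ 2 + 2 * q * y₁ * y₂ + r * y₂ ^ 2 - μ) := by
        linear_combination (-(p - μ + (r - μ)) * μ) * hy
      rw [h4] at h3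
      nlinarith [h3, hsum]
  by_cases hq : q = 0
  · subst hq
    have hDv : D = |p - r| := by
      rw [hD]
      have : (p - r) ^ 2 + 4 * (0:ℝ) ^ 2 = (p - r) ^ 2 := by ring
      rw [this, Real.sqrt_sq_eq_abs]
    by_cases hpr : p ≤ r
    · have hμ : μ = p := by
        rw [hμdef, hDv, abs_of_nonpos (by linarith)]; ring
      refine ⟨μ, ![1, 0], ?_, ?_, hray⟩
      · intro hcontra
        have := congrFun hcontra 0
        simp at this
      · ext i
        fin_cases i <;>
          simp [Matrix.mulVec, dotProduct, Fin.sum_univ_two, hμ]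
    · have hμ : μ = r := by
        rw [hμdef, hDv, abs_of_nonneg (by linarith)]; ring
      refine ⟨μ, ![0, 1], ?_, ?_, hray⟩
      · intro hcontra
        have := congrFun hcontra 1
        simp at this
      · ext i
        fin_cases i <;>
          simp [Matrix.mulVec, dotProduct, Fin.sum_univ_two, hμ]
  · refine ⟨μ, ![q, μ - p], ?_, ?_, hray⟩
    · intro hcontra
      have := congrFun hcontra 0
      simp at this
      exact hq this
    · ext i
      fin_cases i <;>
        simp [Matrix.mulVec, dotProduct, Fin.sum_univ_two]
      · ring
      · linear_combination hchar - (1/2) * hD2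

lemma gram2_low_eig {n : ℕ} (a b : EuclideanSpace ℝ (Fin n)) (ε : ℝ)
    (hε0 : 0 < ε) (hε1 : ε ≤ 1) (h : CloseCollinear ε a b) :
    ∃ (μ : ℝ) (x : Fin 2 → ℝ), x ≠ 0 ∧
      (gram2 a b).mulVec x = μ • x ∧ μ ≤ 10 * ε := by
  obtain ⟨ea, eb, w, s, s', hea, heb, ha, hb⟩ := h
  have hexp : ∀ y₁ y₂ : ℝ, ‖y₁ • a + y₂ • b‖ ^ 2 =
      ‖a‖ ^ 2 * y₁ ^ 2 + 2 * ⟪a, b⟫ * y₁ * y₂ + ‖b‖ ^ 2 * y₂ ^ 2 := by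
    intro y₁ y₂
    rw [norm_add_sq_real, norm_smul, norm_smul, real_inner_smul_left,
      real_inner_smul_right, mul_pow, mul_pow, Real.norm_eq_abs, Real.norm_eq_abs,
      sq_abs, sq_abs]
    ring
  have key : ∃ y₁ y₂ : ℝ, y₁ ^ 2 + y₂ ^ 2 = 1 ∧ ‖y₁ • a + y₂ • b‖ ^ 2 ≤ 10 * ε := by
    by_cases hs : s = 0 ∧ s' = 0
    · refine ⟨1, 0, by norm_num, ?_⟩
      have h1 : a + ea = (0:ℝ) • w := by rw [← hs.1]; exact ha
      rw [zero_smul] at h1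
      have h0 : a = -ea := eq_neg_of_add_eq_zero_left h1
      have hna : ‖a‖ ≤ ε := by rw [h0, norm_neg]; exact hea
      have h2 : ‖(1:ℝ) • a + (0:ℝ) • b‖ = ‖a‖ := by simp
      rw [h2]
      nlinarith [norm_nonneg a]
    · have hpos : 0 < s ^ 2 + s' ^ 2 := by
        rcases not_and_or.mp hs with h' | h'
        · positivity
        · positivity
      set N := Real.sqrt (s ^ 2 + s' ^ 2) with hN
      have hN2 : N ^ 2 = s ^ 2 + s' ^ 2 := Real.sq_sqrt hpos.le
      have hNpos : 0 < N := Real.sqrt_pos.mpr hpos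
      have hsN : |s| ≤ N := by
        rw [← Real.sqrt_sq_eq_abs]; exact Real.sqrt_le_sqrt (by nlinarith [sq_nonneg s'])
      have hs'N : |s'| ≤ N := by
        rw [← Real.sqrt_sq_eq_abs]; exact Real.sqrt_le_sqrt (by nlinarith [sq_nonneg s])
      refine ⟨s' / N, -s / N, ?_, ?_⟩
      · field_simp
        linarith [hN2]
      · have hav : a = s • w - ea := by rw [← ha]; abel
        have hbv : b = s' • w - eb := by rw [← hb]; abel
        have hveq : (s' / N) • a + (-s / N) • b = N⁻¹ • (s • eb - s' • ea) := by
          rw [hav, hbv]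
          have hN0 : N ≠ 0 := hNpos.ne'
          field_simp
          module
        rw [hveq]
        have hnb : ‖N⁻¹ • (s • eb - s' • ea)‖ ≤ 2 * ε := by
          rw [norm_smul]
          have h1 : ‖s • eb - s' • ea‖ ≤ |s| * ε + |s'| * ε := by
            refine le_trans (norm_sub_le _ _) ?_
            rw [norm_smul, norm_smul, Real.norm_eq_abs, Real.norm_eq_abs]
            have h5 := mul_le_mul_of_nonneg_left heb (abs_nonneg s)
            have h6 := mul_le_mul_of_nonneg_left hea (abs_nonneg s')
            linarith
          rw [Real.norm_eq_abs, abs_of_pos (by positivity : (0:ℝ) < N⁻¹)]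
          calc N⁻¹ * ‖s • eb - s' • ea‖ ≤ N⁻¹ * (|s| * ε + |s'| * ε) := by
                gcongr
            _ ≤ N⁻¹ * (N * ε + N * ε) := by gcongr
            _ = 2 * ε := by field_simp; ring
        nlinarith [norm_nonneg (N⁻¹ • (s • eb - s' • ea))]
  obtain ⟨y₁, y₂, hy, hval⟩ := key
  obtain ⟨μ, x, hx0, hmul, hmin⟩ := eig2 (‖a‖ ^ 2) ⟪a, b⟫ (‖b‖ ^ 2)
  refine ⟨μ, x, hx0, ?_, ?_⟩
  · have hg : gram2 a b = Matrix.of ![![‖a‖ ^ 2, ⟪a, b⟫], ![⟪a, b⟫, ‖b‖ ^ 2]] := by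
      unfold gram2
      rw [real_inner_comm b a]
    rw [hg]; exact hmul
  · calc μ ≤ ‖a‖ ^ 2 * y₁ ^ 2 + 2 * ⟪a, b⟫ * y₁ * y₂ + ‖b‖ ^ 2 * y₂ ^ 2 := hmin y₁ y₂ hy
      _ = ‖y₁ • a + y₂ • b‖ ^ 2 := (hexp y₁ y₂).symm
      _ ≤ 10 * ε := hval

open Matrix in
theorem stmt0 {n d : ℕ} (hd : 1 ≤ d) (G : SimpleGraph (Fin n)) (hdeg : MaxDegreeLE G d)
    (u v : Fin n) (t : ℕ) (ε : ℝ) (hε0 : 0 < ε) (hε1 : ε ≤ 1)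
    (h : CloseCollinear ε (qvec G d t u) (qvec G d t v)) :
    ∃ (μ : ℝ) (x : Fin 2 → ℝ), x ≠ 0 ∧
      (gram2 (qvec G d t u) (qvec G d t v)).mulVec x = μ • x ∧ μ ≤ 10 * ε :=
  gram2_low_eig _ _ ε hε0 hε1 h
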